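/- (Theorem 2.5, payoff bound.) Let k > 0, α > 0, β > 0, r > 0, δ > 0, 0 < s < K, and assume 2β x + r − α > 0 for all x ∈ (s, K). Let v be three times differentiable on (s, K), continuous on [s, K] with v' extending continuously to [s, K], satisfying (1/2) k² x³ v''(x) + (α x − β x²) v'(x) − r v(x) = 0 for all x ∈ (s, K), together with v(s) = K − s, v(K) = δ, v'(s) = −1, and v'(K) = a where a > −1. Then v(x) ≤ K − x + δ for all x ∈ (s, K). -/

import Mathlib

open Real Filter Set
open Topology

/-- (Theorem 2.5, payoff bound.) Let `k, α, β, r > 0`, `δ > 0`, `0 < s < K`, and suppose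
`2β x + r − α > 0` on `(s, K)`. If `v` is three times differentiable on `(s, K)`,
continuous on `[s, K]` with derivative extending continuously to `[s, K]`, satisfies
`ℒv = 0` on `(s, K)`, `v(s) = K − s`, `v(K) = δ`, `v'(s) = −1` and `v'(K) = a > −1`,
then `v(x) ≤ K − x + δ` for all `x ∈ (s, K)`. -/
theorem payoff_bound (k α β r s K δ a : ℝ) (v w : ℝ → ℝ)
    (hk : 0 < k) (hα : 0 < α) (hβ : 0 < β) (hr : 0 < r) (hδ : 0 < δ)
    (hs : 0 < s) (hsK : s < K)
    (hcoef : ∀ x ∈ Ioo s K, 0 < 2 * β * x + r - α)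
    (hv_cont : ContinuousOn v (Icc s K))
    (hdiff : ∀ x ∈ Ioo s K, DifferentiableAt ℝ v x)
    (hdiff2 : ∀ x ∈ Ioo s K, DifferentiableAt ℝ (deriv v) x)
    (hdiff3 : ∀ x ∈ Ioo s K, DifferentiableAt ℝ (deriv (deriv v)) x)
    (hODE : ∀ x ∈ Ioo s K,
      (1 / 2) * k ^ 2 * x ^ 3 * deriv (deriv v) x +
        (α * x - β * x ^ 2) * deriv v x - r * v x = 0)
    (hw_cont : ContinuousOn w (Icc s K))
    (hw_eq : ∀ x ∈ Ioo s K, w x = deriv v x)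
    (hvs : v s = K - s) (hvK : v K = δ)
    (hws : w s = -1) (hwK : w K = a) (ha : -1 < a) :
    ∀ x ∈ Ioo s K, v x ≤ K - x + δ := by
  -- Step A: minimum principle for w (= v') : w ≥ -1 on [s,K]
  have key : ∀ y ∈ Icc s K, -1 ≤ w y := by
    obtain ⟨x0, hx0, hmin⟩ :=
      isCompact_Icc.exists_isMinOn (nonempty_Icc.mpr hsK.le) hw_cont
    have hmin' : ∀ y ∈ Icc s K, w x0 ≤ w y := fun y hy => isMinOn_iff.mp hmin y hy
    intro y hy
    suffices h : -1 ≤ w x0 by linarith [hmin' y hy]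
    by_contra hlt
    push_neg at hlt
    have hx0s : x0 ≠ s := by intro h; rw [h, hws] at hlt; linarith
    have hx0K : x0 ≠ K := by intro h; rw [h, hwK] at hlt; linarith
    have hx0I : x0 ∈ Ioo s K :=
      ⟨lt_of_le_of_ne hx0.1 (Ne.symm hx0s), lt_of_le_of_ne hx0.2 hx0K⟩
    have hpw : ∀ x ∈ Ioo s K, deriv v x = w x := fun x hx => (hw_eq x hx).symm
    have hIoo_nhds : Ioo s K ∈ 𝓝 x0 := Ioo_mem_nhds hx0I.1 hx0I.2
    have hloc : IsLocalMin (deriv v) x0 := by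
      filter_upwards [hIoo_nhds] with x hx
      rw [hpw x hx, hpw x0 hx0I]
      exact hmin' x (Ioo_subset_Icc_self hx)
    have hq0 : deriv (deriv v) x0 = 0 := hloc.deriv_eq_zero
    -- second derivative of (deriv v) at the minimum is nonnegative
    have h2 : 0 ≤ deriv (deriv (deriv v)) x0 := by
      by_contra hneg
      push_neg at hneg
      have hhq : HasDerivAt (deriv (deriv v)) (deriv (deriv (deriv v)) x0) x0 :=
        (hdiff3 x0 hx0I).hasDerivAt
      have hslope : Tendsto (slope (deriv (deriv v)) x0) (𝓝[≠] x0)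
          (𝓝 (deriv (deriv (deriv v)) x0)) := hasDerivAt_iff_tendsto_slope.mp hhq
      have hev : ∀ᶠ x in 𝓝[>] x0, slope (deriv (deriv v)) x0 x < 0 :=
        ((hslope.eventually_lt_const hneg).filter_mono
          (nhdsWithin_mono x0 (fun x hx => ne_of_gt hx)))
      have hev2 : ∀ᶠ x in 𝓝[>] x0, x ∈ Ioo s K := by
        have : ∀ᶠ x in 𝓝 x0, x ∈ Ioo s K := hIoo_nhds
        exact this.filter_mono nhdsWithin_le_nhds
      obtain ⟨u, hu, hsub⟩ :=
        mem_nhdsGT_iff_exists_Ioo_subset.mp (hev.and hev2)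
      set t := (x0 + u) / 2 with ht
      have hx0u : x0 < u := hu
      have htmem : t ∈ Ioo x0 u := ⟨by rw [ht]; linarith, by rw [ht]; linarith⟩
      have htI : t ∈ Ioo s K := (hsub htmem).2
      have hqneg : ∀ x ∈ Ioo x0 t, deriv (deriv v) x < 0 := by
        intro x hx
        have hxu : x ∈ Ioo x0 u := ⟨hx.1, hx.2.trans htmem.2⟩
        have hsl := (hsub hxu).1
        rw [slope_def_field] at hsl
        have hxx : 0 < x - x0 := by linarith [hx.1]
        rw [div_neg_iff] at hsl
        rcases hsl with ⟨_, h⟩ | ⟨h, _⟩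
        · linarith
        · rw [hq0] at h; linarith
      have hIccsub : Icc x0 t ⊆ Ioo s K := fun x hx =>
        ⟨lt_of_lt_of_le hx0I.1 hx.1, lt_of_le_of_lt hx.2 htI.2⟩
      have hpc : ContinuousOn (deriv v) (Icc x0 t) := fun x hx =>
        ((hdiff2 x (hIccsub hx)).continuousAt).continuousWithinAt
      have hanti : StrictAntiOn (deriv v) (Icc x0 t) := by
        apply strictAntiOn_of_deriv_neg (convex_Icc _ _) hpc
        intro x hx
        rw [interior_Icc] at hx
        exact hqneg x hx
      have hx0t : x0 < t := htmem.1
      have h1 : deriv v t < deriv v x0 :=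
        hanti (left_mem_Icc.mpr hx0t.le) (right_mem_Icc.mpr hx0t.le) hx0t
      have h2' : w x0 ≤ w t := hmin' t (Ioo_subset_Icc_self htI)
      rw [hpw t htI, hpw x0 hx0I] at h1
      linarith
    -- differentiate the ODE at x0
    have hhv : HasDerivAt v (deriv v x0) x0 := (hdiff x0 hx0I).hasDerivAt
    have hhp : HasDerivAt (deriv v) (deriv (deriv v) x0) x0 := (hdiff2 x0 hx0I).hasDerivAt
    have hhq : HasDerivAt (deriv (deriv v)) (deriv (deriv (deriv v)) x0) x0 :=
      (hdiff3 x0 hx0I).hasDerivAt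
    have hA : HasDerivAt (fun x : ℝ => 1 / 2 * k ^ 2 * x ^ 3)
        (1 / 2 * k ^ 2 * (3 * x0 ^ 2)) x0 := by
      have h := (hasDerivAt_pow 3 x0).const_mul (1 / 2 * k ^ 2)
      convert h using 1
      all_goals first | rfl | (funext x; ring) | (push_cast; ring)
    have hB : HasDerivAt (fun x : ℝ => α * x - β * x ^ 2) (α - β * (2 * x0)) x0 := by
      have h := ((hasDerivAt_id x0).const_mul α).sub ((hasDerivAt_pow 2 x0).const_mul β)
      convert h using 1
      all_goals first | rfl | (push_cast; ring)
    have hG : HasDerivAt (fun x =>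
        1 / 2 * k ^ 2 * x ^ 3 * deriv (deriv v) x +
          (α * x - β * x ^ 2) * deriv v x - r * v x)
        ((1 / 2 * k ^ 2 * (3 * x0 ^ 2) * deriv (deriv v) x0 +
            1 / 2 * k ^ 2 * x0 ^ 3 * deriv (deriv (deriv v)) x0) +
          ((α - β * (2 * x0)) * deriv v x0 +
            (α * x0 - β * x0 ^ 2) * deriv (deriv v) x0) -
          r * deriv v x0) x0 :=
      ((hA.mul hhq).add (hB.mul hhp)).sub (hhv.const_mul r)
    have hGeq : (fun x =>
        1 / 2 * k ^ 2 * x ^ 3 * deriv (deriv v) x +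
          (α * x - β * x ^ 2) * deriv v x - r * v x) =ᶠ[𝓝 x0] (fun _ => (0 : ℝ)) := by
      filter_upwards [hIoo_nhds] with x hx using hODE x hx
    have hG0 : HasDerivAt (fun x =>
        1 / 2 * k ^ 2 * x ^ 3 * deriv (deriv v) x +
          (α * x - β * x ^ 2) * deriv v x - r * v x) 0 x0 :=
      (hasDerivAt_const x0 (0 : ℝ)).congr_of_eventuallyEq hGeq
    have huniq := hG.unique hG0
    rw [hq0] at huniq
    have hP : deriv v x0 = w x0 := hpw x0 hx0I
    have hc := hcoef x0 hx0I
    have hx0pos : 0 < x0 := lt_trans hs hx0I.1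
    have hc3 : 0 < 1 / 2 * k ^ 2 * x0 ^ 3 := by positivity
    nlinarith [mul_nonneg hc3.le h2, mul_pos hc (show (0:ℝ) < -(w x0) by linarith)]
  -- Step C: v(y) + y is monotone on [x, K]
  intro x hx
  have hxK : x ≤ K := hx.2.le
  have hmono : MonotoneOn (fun y => v y + y) (Icc x K) := by
    apply monotoneOn_of_deriv_nonneg (convex_Icc x K)
    · exact (hv_cont.mono (Icc_subset_Icc hx.1.le le_rfl)).add continuous_id.continuousOn
    · intro y hy
      rw [interior_Icc] at hy
      have hyI : y ∈ Ioo s K := ⟨hx.1.trans hy.1, hy.2⟩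
      exact ((hdiff y hyI).add (differentiableAt_id)).differentiableWithinAt
    · intro y hy
      rw [interior_Icc] at hy
      have hyI : y ∈ Ioo s K := ⟨hx.1.trans hy.1, hy.2⟩
      have hd : deriv (fun y => v y + y) y = deriv v y + 1 :=
        ((hdiff y hyI).hasDerivAt.add (hasDerivAt_id y)).deriv
      rw [hd, ← hw_eq y hyI]
      linarith [key y (Ioo_subset_Icc_self hyI)]
  have h := hmono (left_mem_Icc.mpr hxK) (right_mem_Icc.mpr hxK) hxK
  simp only at h
  linarith [h, hvK.symm ▸ h]
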